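/- Let Ω = (0,L)³, γ ∈ (0,1), U > 0, and suppose u, Φ ∈ H¹(Ω;ℝ³) with ‖∇Φ‖_{L^∞(O)} ≤ U/(γL) on the strip O = {L−γL ≤ z ≤ L}, supp Φ ⊂ O̅, ‖u−Φ‖_{L²(O)} ≤ γL‖∇(u−Φ)‖_{L²(O)}, and ‖∇Φ‖_{L²(Ω)}² ≤ U²L/γ. Then |∫_O ((u−Φ)·∇Φ)·(u−Φ) dx| ≤ 2γLU‖∇u‖_{L²(Ω)}² + 2U³L². -/

import Mathlib

/-- Squared Frobenius norm of the Jacobian of a vector field on ℝ³. -/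
noncomputable def jacFrobSq (v : EuclideanSpace ℝ (Fin 3) → EuclideanSpace ℝ (Fin 3))
    (p : EuclideanSpace ℝ (Fin 3)) : ℝ :=
  ∑ i : Fin 3, ∑ j : Fin 3, (fderiv ℝ v p (EuclideanSpace.single j 1) i)^2

/-- Convective integrand ((a·∇v)·w)(p). -/
noncomputable def convTerm (a v w : EuclideanSpace ℝ (Fin 3) → EuclideanSpace ℝ (Fin 3))
    (p : EuclideanSpace ℝ (Fin 3)) : ℝ :=
  ∑ i : Fin 3, (fderiv ℝ v p (a p) i) * (w p i)

open MeasureTheory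

private lemma hyperplane_null (i : Fin 3) (c : ℝ) :
    volume {p : EuclideanSpace ℝ (Fin 3) | p i = c} = 0 := by
  have e := EuclideanSpace.volume_preserving_symm_measurableEquiv_toLp (Fin 3)
  have hs : MeasurableSet {f : Fin 3 → ℝ | f i = c} :=
    measurableSet_eq_fun (measurable_pi_apply i) measurable_const
  have heq : {p : EuclideanSpace ℝ (Fin 3) | p i = c}
      = (MeasurableEquiv.toLp 2 (Fin 3 → ℝ)).symm ⁻¹' {f : Fin 3 → ℝ | f i = c} := rfl
  rw [heq, e.measure_preimage hs.nullMeasurableSet, volume_pi]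
  exact Measure.pi_hyperplane (fun _ => (volume : Measure ℝ)) i c

private lemma conv_bound (D : EuclideanSpace ℝ (Fin 3) →L[ℝ] EuclideanSpace ℝ (Fin 3))
    (x : EuclideanSpace ℝ (Fin 3)) :
    |∑ i : Fin 3, D x i * x i| ≤
      Real.sqrt (∑ i : Fin 3, ∑ j : Fin 3, (D (EuclideanSpace.single j 1) i)^2) * ‖x‖^2 := by
  set J := ∑ i : Fin 3, ∑ j : Fin 3, (D (EuclideanSpace.single j 1) i)^2 with hJ
  have hJ0 : 0 ≤ J := Finset.sum_nonneg fun i _ => Finset.sum_nonneg fun j _ => sq_nonneg _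
  set S := ∑ i : Fin 3, (x i)^2 with hS
  have hS0 : 0 ≤ S := Finset.sum_nonneg fun i _ => sq_nonneg _
  have hnorm : ‖x‖^2 = S := by
    rw [EuclideanSpace.norm_eq, Real.sq_sqrt (Finset.sum_nonneg fun i _ => sq_nonneg _)]
    simp [hS, Real.norm_eq_abs, sq_abs]
  have hxrepr : ∀ i : Fin 3, D x i = ∑ j : Fin 3, x j * D (EuclideanSpace.single j 1) i := by
    intro i
    have hx : (∑ j : Fin 3, x j • (EuclideanSpace.single j (1:ℝ))) = x := by
      simpa using (EuclideanSpace.basisFun (Fin 3) ℝ).sum_repr x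
    have happ : ∀ (w : Fin 3 → EuclideanSpace ℝ (Fin 3)),
        (∑ j : Fin 3, w j) i = ∑ j : Fin 3, w j i := fun w =>
      by rw [WithLp.ofLp_sum]; exact Finset.sum_apply i Finset.univ _
    conv_lhs => rw [← hx]
    rw [map_sum, happ]
    simp [PiLp.smul_apply, smul_eq_mul]
  have hDx : ∑ i : Fin 3, (D x i)^2 ≤ S * J := by
    have h1 : ∀ i : Fin 3, (D x i)^2 ≤ S * ∑ j : Fin 3, (D (EuclideanSpace.single j 1) i)^2 := by
      intro i
      rw [hxrepr i]
      exact Finset.sum_mul_sq_le_sq_mul_sq _ _ _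
    calc ∑ i : Fin 3, (D x i)^2
        ≤ ∑ i : Fin 3, S * ∑ j : Fin 3, (D (EuclideanSpace.single j 1) i)^2 :=
          Finset.sum_le_sum fun i _ => h1 i
      _ = S * J := by rw [hJ, Finset.mul_sum]
  have hCS : (∑ i : Fin 3, D x i * x i)^2 ≤ (∑ i : Fin 3, (D x i)^2) * S :=
    Finset.sum_mul_sq_le_sq_mul_sq _ _ _
  have hsq : (∑ i : Fin 3, D x i * x i)^2 ≤ J * S^2 := by
    have h2 : (∑ i : Fin 3, (D x i)^2) * S ≤ (S * J) * S :=
      mul_le_mul_of_nonneg_right hDx hS0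
    nlinarith [hCS, h2]
  calc |∑ i : Fin 3, D x i * x i|
      = Real.sqrt ((∑ i : Fin 3, D x i * x i)^2) := (Real.sqrt_sq_eq_abs _).symm
    _ ≤ Real.sqrt (J * S^2) := Real.sqrt_le_sqrt hsq
    _ = Real.sqrt J * S := by rw [Real.sqrt_mul hJ0, Real.sqrt_sq hS0]
    _ = Real.sqrt J * ‖x‖^2 := by rw [hnorm]

/-- Estimate (3.9): |∫_O ((u−Φ)·∇Φ)·(u−Φ)| ≤ 2γLU‖∇u‖² + 2U³L². -/
theorem stmt_15 (U L γ : ℝ) (hU : 0 < U) (hL : 0 < L) (hγ : γ ∈ Set.Ioo (0:ℝ) 1)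
    (Ω O : Set (EuclideanSpace ℝ (Fin 3)))
    (hΩ : Ω = {p : EuclideanSpace ℝ (Fin 3) | ∀ i, p i ∈ Set.Ioo (0:ℝ) L})
    (hO : O = {p : EuclideanSpace ℝ (Fin 3) |
      p 0 ∈ Set.Icc (0:ℝ) L ∧ p 1 ∈ Set.Icc (0:ℝ) L ∧ p 2 ∈ Set.Icc (L - γ*L) L})
    (u Φ : EuclideanSpace ℝ (Fin 3) → EuclideanSpace ℝ (Fin 3))
    (hu : ContDiffOn ℝ 1 u Ω) (hΦc : ContDiffOn ℝ 1 Φ Ω)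
    (hsupp : ∀ p, p ∉ O → Φ p = 0)
    (hgradΦinf : ∀ p ∈ O, Real.sqrt (jacFrobSq Φ p) ≤ U/(γ*L))
    (hPoin : (∫ p in O, ‖u p - Φ p‖^2) ≤
      (γ*L)^2 * ∫ p in O, jacFrobSq (fun q => u q - Φ q) p)
    (hgradΦ : (∫ p in Ω, jacFrobSq Φ p) ≤ U^2 * L / γ)
    (hint1 : MeasureTheory.IntegrableOn (fun p => ‖u p - Φ p‖^2) O)
    (hint2 : MeasureTheory.IntegrableOn (jacFrobSq u) Ω)
    (hint3 : MeasureTheory.IntegrableOn (jacFrobSq (fun q => u q - Φ q)) Ω)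
    (hint4 : MeasureTheory.IntegrableOn (convTerm (fun q => u q - Φ q) Φ (fun q => u q - Φ q)) O) :
    |∫ p in O, convTerm (fun q => u q - Φ q) Φ (fun q => u q - Φ q) p| ≤
      2*γ*L*U * (∫ p in Ω, jacFrobSq u p) + 2*U^3*L^2 := by
  obtain ⟨hγ0, hγ1⟩ := hγ
  have hγL : 0 < γ * L := mul_pos hγ0 hL
  have hcont : ∀ i : Fin 3, Continuous fun p : EuclideanSpace ℝ (Fin 3) => p i := fun i =>
    (EuclideanSpace.proj i : EuclideanSpace ℝ (Fin 3) →L[ℝ] ℝ).continuous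
  have hOmeas : MeasurableSet O := by
    rw [hO]
    simp only [Set.setOf_and]
    exact (((hcont 0).measurable measurableSet_Icc).inter
      (((hcont 1).measurable measurableSet_Icc).inter
        ((hcont 2).measurable measurableSet_Icc)))
  have hΩopen : IsOpen Ω := by
    rw [hΩ]
    have : {p : EuclideanSpace ℝ (Fin 3) | ∀ i, p i ∈ Set.Ioo (0:ℝ) L}
        = ⋂ i, (fun p : EuclideanSpace ℝ (Fin 3) => p i) ⁻¹' Set.Ioo (0:ℝ) L := by
      ext p; simp
    rw [this]
    exact isOpen_iInter_of_finite fun i => isOpen_Ioo.preimage (hcont i)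
  have hdiff : ∀ p ∈ Ω, DifferentiableAt ℝ u p ∧ DifferentiableAt ℝ Φ p := fun p hp =>
    ⟨((hu.differentiableOn one_ne_zero) p hp).differentiableAt (hΩopen.mem_nhds hp),
     ((hΦc.differentiableOn one_ne_zero) p hp).differentiableAt (hΩopen.mem_nhds hp)⟩
  have hjacnn : ∀ (v : EuclideanSpace ℝ (Fin 3) → EuclideanSpace ℝ (Fin 3)) p,
      0 ≤ jacFrobSq v p := fun v p =>
    Finset.sum_nonneg fun i _ => Finset.sum_nonneg fun j _ => sq_nonneg _
  -- pointwise Jacobian inequalities on Ω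
  have hjacΦ : ∀ p ∈ Ω, jacFrobSq Φ p ≤
      2 * jacFrobSq u p + 2 * jacFrobSq (fun q => u q - Φ q) p := by
    intro p hp
    have hf : fderiv ℝ (fun q => u q - Φ q) p = fderiv ℝ u p - fderiv ℝ Φ p :=
      fderiv_sub (hdiff p hp).1 (hdiff p hp).2
    unfold jacFrobSq
    have key : ∀ i j : Fin 3, (fderiv ℝ Φ p (EuclideanSpace.single j 1) i)^2 ≤
        2*(fderiv ℝ u p (EuclideanSpace.single j 1) i)^2
        + 2*(fderiv ℝ (fun q => u q - Φ q) p (EuclideanSpace.single j 1) i)^2 := by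
      intro i j
      rw [hf]
      simp only [ContinuousLinearMap.sub_apply, PiLp.sub_apply]
      nlinarith [sq_nonneg (2 * fderiv ℝ u p (EuclideanSpace.single j 1) i
        - fderiv ℝ Φ p (EuclideanSpace.single j 1) i)]
    calc ∑ i : Fin 3, ∑ j : Fin 3, (fderiv ℝ Φ p (EuclideanSpace.single j 1) i)^2
        ≤ ∑ i : Fin 3, ∑ j : Fin 3,
          (2*(fderiv ℝ u p (EuclideanSpace.single j 1) i)^2
            + 2*(fderiv ℝ (fun q => u q - Φ q) p (EuclideanSpace.single j 1) i)^2) :=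
          Finset.sum_le_sum fun i _ => Finset.sum_le_sum fun j _ => key i j
      _ = _ := by simp [Finset.sum_add_distrib, Finset.mul_sum]
  have hjacd : ∀ p ∈ Ω, jacFrobSq (fun q => u q - Φ q) p ≤
      2 * jacFrobSq u p + 2 * jacFrobSq Φ p := by
    intro p hp
    have hf : fderiv ℝ (fun q => u q - Φ q) p = fderiv ℝ u p - fderiv ℝ Φ p :=
      fderiv_sub (hdiff p hp).1 (hdiff p hp).2
    unfold jacFrobSq
    have key : ∀ i j : Fin 3, (fderiv ℝ (fun q => u q - Φ q) p (EuclideanSpace.single j 1) i)^2 ≤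
        2*(fderiv ℝ u p (EuclideanSpace.single j 1) i)^2
        + 2*(fderiv ℝ Φ p (EuclideanSpace.single j 1) i)^2 := by
      intro i j
      rw [hf]
      simp only [ContinuousLinearMap.sub_apply, PiLp.sub_apply]
      nlinarith [sq_nonneg (fderiv ℝ u p (EuclideanSpace.single j 1) i
        + fderiv ℝ Φ p (EuclideanSpace.single j 1) i)]
    calc ∑ i : Fin 3, ∑ j : Fin 3,
          (fderiv ℝ (fun q => u q - Φ q) p (EuclideanSpace.single j 1) i)^2
        ≤ ∑ i : Fin 3, ∑ j : Fin 3,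
          (2*(fderiv ℝ u p (EuclideanSpace.single j 1) i)^2
            + 2*(fderiv ℝ Φ p (EuclideanSpace.single j 1) i)^2) :=
          Finset.sum_le_sum fun i _ => Finset.sum_le_sum fun j _ => key i j
      _ = _ := by simp [Finset.sum_add_distrib, Finset.mul_sum]
  -- measurability of jacFrobSq
  have hmeas : ∀ v : EuclideanSpace ℝ (Fin 3) → EuclideanSpace ℝ (Fin 3),
      Measurable (jacFrobSq v) := by
    intro v
    unfold jacFrobSq
    refine Finset.measurable_sum _ fun i _ => Finset.measurable_sum _ fun j _ => ?_
    exact ((hcont i).measurable.comp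
      (measurable_fderiv_apply_const ℝ v (EuclideanSpace.single j 1))).pow_const 2
  -- integrability of jacFrobSq Φ on Ω
  have hΦint : IntegrableOn (jacFrobSq Φ) Ω := by
    have hg : IntegrableOn
        (fun p => 2 * jacFrobSq u p + 2 * jacFrobSq (fun q => u q - Φ q) p) Ω :=
      (hint2.const_mul 2).add (hint3.const_mul 2)
    refine Integrable.mono' hg ((hmeas Φ).aestronglyMeasurable) ?_
    refine (ae_restrict_iff' hΩopen.measurableSet).2 (ae_of_all _ fun p hp => ?_)
    rw [Real.norm_eq_abs, abs_of_nonneg (hjacnn Φ p)]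
    exact hjacΦ p hp
  -- Step 5: ∫_Ω jac(u-Φ) ≤ 2∫ jac u + 2U²L/γ
  have h5 : (∫ p in Ω, jacFrobSq (fun q => u q - Φ q) p) ≤
      2 * (∫ p in Ω, jacFrobSq u p) + 2 * (U^2*L/γ) := by
    have hmono : (∫ p in Ω, jacFrobSq (fun q => u q - Φ q) p) ≤
        ∫ p in Ω, (2 * jacFrobSq u p + 2 * jacFrobSq Φ p) :=
      setIntegral_mono_on hint3 ((hint2.const_mul 2).add (hΦint.const_mul 2))
        hΩopen.measurableSet hjacd
    have hsplit : (∫ p in Ω, (2 * jacFrobSq u p + 2 * jacFrobSq Φ p)) =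
        2 * (∫ p in Ω, jacFrobSq u p) + 2 * (∫ p in Ω, jacFrobSq Φ p) := by
      rw [integral_add (hint2.const_mul 2) (hΦint.const_mul 2),
        integral_const_mul, integral_const_mul]
    calc (∫ p in Ω, jacFrobSq (fun q => u q - Φ q) p)
        ≤ 2 * (∫ p in Ω, jacFrobSq u p) + 2 * (∫ p in Ω, jacFrobSq Φ p) := by
          rw [← hsplit]; exact hmono
      _ ≤ 2 * (∫ p in Ω, jacFrobSq u p) + 2 * (U^2*L/γ) := by linarith [hgradΦ]
  -- Step 4: O ⊆ Ω up to null set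
  have hOae : O ≤ᵐ[volume] Ω := by
    rw [ae_le_set]
    have hsub : O \ Ω ⊆ {p : EuclideanSpace ℝ (Fin 3) | p 0 = 0}
        ∪ {p | p 0 = L} ∪ {p | p 1 = 0} ∪ {p | p 1 = L} ∪ {p | p 2 = L} := by
      rintro p ⟨hpO, hpΩ⟩
      rw [hO] at hpO
      rw [hΩ] at hpΩ
      obtain ⟨h0, h1, h2⟩ := hpO
      simp only [Set.mem_setOf_eq, not_forall] at hpΩ
      obtain ⟨i, hi⟩ := hpΩ
      simp only [Set.mem_Icc] at h0 h1 h2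
      simp only [Set.mem_Ioo, not_and_or, not_lt] at hi
      simp only [Set.mem_union, Set.mem_setOf_eq]
      have hi3 : i = 0 ∨ i = 1 ∨ i = 2 := by omega
      rcases hi3 with rfl | rfl | rfl
      · rcases hi with h | h
        · exact Or.inl (Or.inl (Or.inl (Or.inl (le_antisymm h h0.1))))
        · exact Or.inl (Or.inl (Or.inl (Or.inr (le_antisymm h0.2 h))))
      · rcases hi with h | h
        · exact Or.inl (Or.inl (Or.inr (le_antisymm h h1.1)))
        · exact Or.inl (Or.inr (le_antisymm h1.2 h))
      · rcases hi with h | h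
        · exfalso
          have : L - γ*L > 0 := by nlinarith
          linarith [h2.1]
        · exact Or.inr (le_antisymm h2.2 h)
    refine measure_mono_null hsub ?_
    refine measure_union_null (measure_union_null (measure_union_null
      (measure_union_null ?_ ?_) ?_) ?_) ?_ <;> exact hyperplane_null _ _
  have h4 : (∫ p in O, jacFrobSq (fun q => u q - Φ q) p) ≤
      ∫ p in Ω, jacFrobSq (fun q => u q - Φ q) p :=
    setIntegral_mono_set hint3 (ae_of_all _ fun p => hjacnn _ p) hOae
  -- Step 1-2: pointwise bound and integral bound
  have hpt : ∀ p ∈ O, |convTerm (fun q => u q - Φ q) Φ (fun q => u q - Φ q) p| ≤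
      (U/(γ*L)) * ‖u p - Φ p‖^2 := by
    intro p hp
    have hb := conv_bound (fderiv ℝ Φ p) (u p - Φ p)
    have heq : convTerm (fun q => u q - Φ q) Φ (fun q => u q - Φ q) p
        = ∑ i : Fin 3, fderiv ℝ Φ p (u p - Φ p) i * (u p - Φ p) i := rfl
    rw [heq]
    calc |∑ i : Fin 3, fderiv ℝ Φ p (u p - Φ p) i * (u p - Φ p) i|
        ≤ Real.sqrt (jacFrobSq Φ p) * ‖u p - Φ p‖^2 := hb
      _ ≤ (U/(γ*L)) * ‖u p - Φ p‖^2 :=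
          mul_le_mul_of_nonneg_right (hgradΦinf p hp) (sq_nonneg _)
  have h1 : |∫ p in O, convTerm (fun q => u q - Φ q) Φ (fun q => u q - Φ q) p| ≤
      ∫ p in O, |convTerm (fun q => u q - Φ q) Φ (fun q => u q - Φ q) p| := by
    simpa [Real.norm_eq_abs] using
      norm_integral_le_integral_norm (μ := volume.restrict O)
        (f := convTerm (fun q => u q - Φ q) Φ (fun q => u q - Φ q))
  have h2 : (∫ p in O, |convTerm (fun q => u q - Φ q) Φ (fun q => u q - Φ q) p|) ≤
      (U/(γ*L)) * ∫ p in O, ‖u p - Φ p‖^2 := by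
    rw [← integral_const_mul]
    exact setIntegral_mono_on hint4.abs (hint1.const_mul _) hOmeas hpt
  have h3 : (U/(γ*L)) * (∫ p in O, ‖u p - Φ p‖^2) ≤
      γ*L*U * ∫ p in O, jacFrobSq (fun q => u q - Φ q) p := by
    have hm := mul_le_mul_of_nonneg_left hPoin (le_of_lt (div_pos hU hγL))
    calc (U/(γ*L)) * (∫ p in O, ‖u p - Φ p‖^2)
        ≤ (U/(γ*L)) * ((γ*L)^2 * ∫ p in O, jacFrobSq (fun q => u q - Φ q) p) := hm
      _ = γ*L*U * ∫ p in O, jacFrobSq (fun q => u q - Φ q) p := by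
          field_simp
  have hγLU : 0 ≤ γ*L*U := le_of_lt (mul_pos hγL hU)
  calc |∫ p in O, convTerm (fun q => u q - Φ q) Φ (fun q => u q - Φ q) p|
      ≤ (U/(γ*L)) * ∫ p in O, ‖u p - Φ p‖^2 := h1.trans h2
    _ ≤ γ*L*U * ∫ p in O, jacFrobSq (fun q => u q - Φ q) p := h3
    _ ≤ γ*L*U * ∫ p in Ω, jacFrobSq (fun q => u q - Φ q) p :=
        mul_le_mul_of_nonneg_left h4 hγLU
    _ ≤ γ*L*U * (2 * (∫ p in Ω, jacFrobSq u p) + 2 * (U^2*L/γ)) :=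
        mul_le_mul_of_nonneg_left h5 hγLU
    _ = 2*γ*L*U * (∫ p in Ω, jacFrobSq u p) + 2*U^3*L^2 := by
        field_simp
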